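/- For every n ≥ 2 and all indices i_1,…,i_n ∈ {1,…,d}, one has (ev⊗id)(∂_{i_n} P_{i_{n−1},…,i_1}) = δ_{i_{n−1},i_n} · P_{i_{n−2},…,i_1}, where ev⊗id : ℂ⟨X_1,…,X_d⟩ ⊗ ℂ⟨X_1,…,X_d⟩ → ℂ⟨X_1,…,X_d⟩ is the linear map induced by A ⊗ B ↦ τ(A(x))·B. Consequently, for all n ≥ 1, P_{i_n,…,i_1} = X_{i_n}·P_{i_{n−1},…,i_1} − (ev⊗id)(∂_{i_n} P_{i_{n−1},…,i_1}); i.e., the recursive definition of the free Chebyshev polynomials coincides with the definition via conditional expectation against the semicircular trace. -/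

import Mathlib

open scoped ComplexOrder TensorProduct

noncomputable section

/-- Free Chebyshev polynomials, indexed by a word read left-to-right:
`cheb [i_n, ..., i_1] = P_{i_n, ..., i_1}`. -/
def cheb {d : ℕ} : List (Fin d) → FreeAlgebra ℂ (Fin d)
  | [] => 1
  | [i] => FreeAlgebra.ι ℂ i
  | i :: j :: t => FreeAlgebra.ι ℂ i * cheb (j :: t) - (if i = j then (1 : ℂ) else 0) • cheb t

/-- A faithful tracial state on a `*`-algebra. -/
def IsFaithfulTracialState {A : Type*} [Ring A] [StarRing A] [Algebra ℂ A]
    (τ : A →ₗ[ℂ] ℂ) : Prop :=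
  τ 1 = 1 ∧ (∀ a : A, 0 ≤ τ (star a * a)) ∧ (∀ a : A, τ (star a * a) = 0 → a = 0) ∧
    ∀ a b : A, τ (a * b) = τ (b * a)

/-- The `k`-th moment of the standard semicircle distribution on `[-2, 2]`. -/
def semicircleMoment (k : ℕ) : ℝ :=
  (1 / (2 * Real.pi)) * ∫ t in (-2 : ℝ)..2, t ^ k * Real.sqrt (4 - t ^ 2)

/-- `x` is a free semicircular system with respect to `τ`. -/
def IsFreeSemicircular {A : Type*} [Ring A] [StarRing A] [Algebra ℂ A] {d : ℕ}
    (τ : A →ₗ[ℂ] ℂ) (x : Fin d → A) : Prop :=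
  (∀ i, star (x i) = x i) ∧
  (∀ i k, τ (x i ^ k) = (semicircleMoment k : ℂ)) ∧
  ∀ (k : ℕ) (j : Fin (k + 1) → Fin d),
    (∀ s : Fin k, j s.castSucc ≠ j s.succ) →
    ∀ p : Fin (k + 1) → Polynomial ℂ,
      τ ((List.ofFn fun s : Fin (k + 1) =>
        Polynomial.aeval (x (j s)) (p s)
          - τ (Polynomial.aeval (x (j s)) (p s)) • (1 : A))).prod = 0

/-- The `L²`-norm `‖z‖₂ = τ(z z*)^{1/2}` associated with `τ`. -/
def l2norm {A : Type*} [Ring A] [StarRing A] [Algebra ℂ A] (τ : A →ₗ[ℂ] ℂ) (z : A) : ℝ :=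
  Real.sqrt (τ (z * star z)).re

/-- Noncommutative polynomials of degree at most `n`. -/
def degLE (d n : ℕ) : Submodule ℂ (FreeAlgebra ℂ (Fin d)) :=
  Submodule.span ℂ
    {w | ∃ I : List (Fin d), I.length ≤ n ∧ w = (I.map (FreeAlgebra.ι ℂ)).prod}

/-- Elements homogeneous of degree `n`. -/
def chebHomog {A : Type*} [Ring A] [Algebra ℂ A] {d : ℕ} (x : Fin d → A) (n : ℕ) :
    Submodule ℂ A :=
  Submodule.span ℂ
    {a | ∃ I : List (Fin d), I.length = n ∧ a = FreeAlgebra.lift ℂ x (cheb I)}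

/-- `‖P_n f‖₂`, the `ℓ²`-norm of the degree-`n` free Chebyshev coefficients of `f`. -/
def chebProjL2 {A : Type*} [Ring A] [StarRing A] [Algebra ℂ A] {d : ℕ}
    (τ : A →ₗ[ℂ] ℂ) (x : Fin d → A) (n : ℕ) (f : A) : ℝ :=
  Real.sqrt (∑ I : Fin n → Fin d,
    ‖τ (f * star (FreeAlgebra.lift ℂ x (cheb (List.ofFn I))))‖ ^ 2)

/-- The rescaled Chebyshev polynomials of the second kind, `𝒰_n(X) = U_n(X/2)`. -/
def chebU : ℕ → Polynomial ℂ
  | 0 => 1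
  | 1 => Polynomial.X
  | n + 2 => Polynomial.X * chebU (n + 1) - chebU n

end


noncomputable def chebUR : ℕ → Polynomial ℝ
  | 0 => 1
  | 1 => Polynomial.X
  | n + 2 => Polynomial.X * chebUR (n + 1) - chebUR n

lemma chebUR_eval_cos : ∀ (k : ℕ) (θ : ℝ),
    (chebUR k).eval (2 * Real.cos θ) * Real.sin θ = Real.sin (((k : ℝ) + 1) * θ) := by
  have key : ∀ k : ℕ, (∀ θ, (chebUR k).eval (2 * Real.cos θ) * Real.sin θ
      = Real.sin (((k : ℝ) + 1) * θ)) ∧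
      ∀ θ, (chebUR (k+1)).eval (2 * Real.cos θ) * Real.sin θ
        = Real.sin (((k : ℝ) + 1 + 1) * θ) := by
    intro k
    induction k with
    | zero =>
      constructor <;> intro θ <;> simp [chebUR]
      · rw [show ((1:ℝ) + 1) * θ = 2 * θ by ring, Real.sin_two_mul]; ring
    | succ n ih =>
      refine ⟨by push_cast; exact ih.2, fun θ => ?_⟩
      show (chebUR (n+2)).eval _ * _ = _
      rw [chebUR]
      have h1 := ih.1 θ
      have h2 := ih.2 θ
      push_cast
      rw [show ((n:ℝ) + 1 + 1 + 1) * θ = ((n:ℝ) + 1 + 1) * θ + θ by ring, Real.sin_add]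
      rw [show ((n:ℝ) + 1) * θ = ((n:ℝ) + 1 + 1) * θ - θ by ring, Real.sin_sub] at h1
      simp only [Polynomial.eval_sub, Polynomial.eval_mul, Polynomial.eval_X]
      linear_combination 2 * Real.cos θ * h2 - h1
  intro k θ
  exact (key k).1 θ

lemma integral_cos_nat (m : ℕ) (hm : 1 ≤ m) :
    ∫ x in (0:ℝ)..Real.pi, Real.cos (m * x) = 0 := by
  have hm' : (m : ℝ) ≠ 0 := by positivity
  rw [intervalIntegral.integral_comp_mul_left Real.cos hm']
  simp [Real.sin_nat_mul_pi]

lemma integral_chebUR (k : ℕ) (hk : 1 ≤ k) :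
    ∫ t in (-2:ℝ)..2, (chebUR k).eval t * Real.sqrt (4 - t^2) = 0 := by
  set g : ℝ → ℝ := fun t => (chebUR k).eval t * Real.sqrt (4 - t^2) with hg
  have hgc : Continuous g := by
    apply Continuous.mul (Polynomial.continuous _)
    exact Real.continuous_sqrt.comp (continuous_const.sub (continuous_pow 2))
  have hsub : ∫ x in (0:ℝ)..Real.pi, (-(2 * Real.sin x)) • (g ∘ fun θ => 2 * Real.cos θ) x
      = ∫ t in (2 * Real.cos 0)..(2 * Real.cos Real.pi), g t := by
    apply intervalIntegral.integral_comp_smul_deriv _ _ hgc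
    · intro x _
      simpa [mul_comm, neg_mul, mul_neg] using (Real.hasDerivAt_cos x).const_mul 2
    · exact ((continuous_const.mul Real.continuous_sin).neg).continuousOn
  rw [Real.cos_zero, Real.cos_pi] at hsub
  norm_num at hsub
  -- hsub : ∫ x in 0..π, -(2 sin x) • g (2 cos x) = ∫ t in 2..-2, g t
  have h1 : ∫ t in (-2:ℝ)..2, g t = ∫ x in (0:ℝ)..Real.pi, 2 * Real.sin x * g (2 * Real.cos x) := by
    rw [intervalIntegral.integral_symm (2:ℝ) (-2), ← hsub, neg_neg]
  rw [h1]
  have h2 : ∀ x ∈ Set.uIcc (0:ℝ) Real.pi,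
      2 * Real.sin x * g (2 * Real.cos x)
        = 2 * Real.cos (k * x) - 2 * Real.cos ((k + 2 : ℕ) * x) := by
    intro x hx
    rw [Set.uIcc_of_le Real.pi_pos.le] at hx
    have hs : 0 ≤ Real.sin x := Real.sin_nonneg_of_nonneg_of_le_pi hx.1 hx.2
    have hsq : 4 - (2 * Real.cos x)^2 = (2 * Real.sin x)^2 := by
      have := Real.sin_sq_add_cos_sq x; nlinarith
    have hrt : Real.sqrt (4 - (2 * Real.cos x)^2) = 2 * Real.sin x := by
      rw [hsq, Real.sqrt_sq (by positivity)]
    have hc := chebUR_eval_cos k x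
    have ek : ((k + 2 : ℕ) : ℝ) * x = ((k:ℝ) + 1) * x + x := by push_cast; ring
    have ek2 : (k : ℝ) * x = ((k:ℝ) + 1) * x - x := by ring
    rw [ek, ek2, Real.cos_add, Real.cos_sub]
    simp only [hg, hrt]
    linear_combination (4 * Real.sin x) * hc
  rw [intervalIntegral.integral_congr h2]
  have ic : ∀ m : ℕ, IntervalIntegrable (fun x => 2 * Real.cos (m * x))
      MeasureTheory.volume (0:ℝ) Real.pi := fun m =>
    (continuous_const.mul (Real.continuous_cos.comp (continuous_const.mul continuous_id))).intervalIntegrable _ _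
  rw [intervalIntegral.integral_sub (ic k) (ic (k+2))]
  rw [intervalIntegral.integral_const_mul, intervalIntegral.integral_const_mul,
    integral_cos_nat k hk, integral_cos_nat (k+2) (by omega)]
  ring

lemma chebU_eq_map : ∀ k : ℕ, chebU k = (chebUR k).map (algebraMap ℝ ℂ) := by
  have key : ∀ k : ℕ, chebU k = (chebUR k).map (algebraMap ℝ ℂ) ∧
      chebU (k+1) = (chebUR (k+1)).map (algebraMap ℝ ℂ) := by
    intro k
    induction k with
    | zero => constructor <;> simp [chebU, chebUR]
    | succ n ih =>
      refine ⟨ih.2, ?_⟩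
      show chebU (n+2) = (chebUR (n+2)).map _
      rw [chebU, chebUR, ih.1, ih.2]
      simp [Polynomial.map_sub, Polynomial.map_mul]
  exact fun k => (key k).1

lemma tau_aeval_chebU {A : Type*} [Ring A] [StarRing A] [Algebra ℂ A] {d : ℕ}
    (τ : A →ₗ[ℂ] ℂ) (x : Fin d → A) (hx : IsFreeSemicircular τ x) (i : Fin d)
    (k : ℕ) (hk : 1 ≤ k) : τ (Polynomial.aeval (x i) (chebU k)) = 0 := by
  set N := (chebUR k).natDegree + 1 with hN
  have hdeg : (chebU k).natDegree < N := by
    rw [chebU_eq_map k]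
    exact lt_of_le_of_lt Polynomial.natDegree_map_le (Nat.lt_succ_self _)
  rw [Polynomial.aeval_eq_sum_range' hdeg, map_sum]
  have hcoeff : ∀ n, (chebU k).coeff n = ((chebUR k).coeff n : ℂ) := by
    intro n; rw [chebU_eq_map k, Polynomial.coeff_map]; rfl
  have hterm : ∀ n, τ ((chebU k).coeff n • x i ^ n)
      = (((chebUR k).coeff n * semicircleMoment n : ℝ) : ℂ) := by
    intro n
    rw [map_smul, hx.2.1 i n, hcoeff n, smul_eq_mul, Complex.ofReal_mul]
  simp only [hterm]
  rw [← Complex.ofReal_sum]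
  norm_cast
  -- real sum = 0
  have hint : ∀ n : ℕ, IntervalIntegrable (fun t : ℝ => (chebUR k).coeff n * (t ^ n * Real.sqrt (4 - t ^ 2)))
      MeasureTheory.volume (-2 : ℝ) 2 := by
    intro n
    apply Continuous.intervalIntegrable
    exact continuous_const.mul ((continuous_pow n).mul
      (Real.continuous_sqrt.comp (continuous_const.sub (continuous_pow 2))))
  have hdeg' : (chebUR k).natDegree < N := Nat.lt_succ_self _
  calc ∑ n ∈ Finset.range N, (chebUR k).coeff n * semicircleMoment n
      = (1 / (2 * Real.pi)) * ∑ n ∈ Finset.range N,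
          ∫ t in (-2:ℝ)..2, (chebUR k).coeff n * (t ^ n * Real.sqrt (4 - t ^ 2)) := by
        rw [Finset.mul_sum]
        refine Finset.sum_congr rfl fun n _ => ?_
        rw [intervalIntegral.integral_const_mul, semicircleMoment]
        ring
    _ = (1 / (2 * Real.pi)) * ∫ t in (-2:ℝ)..2,
          (chebUR k).eval t * Real.sqrt (4 - t ^ 2) := by
        rw [← intervalIntegral.integral_finset_sum (fun n _ => hint n)]
        congr 1
        apply intervalIntegral.integral_congr
        intro t _
        show ∑ n ∈ Finset.range N, (chebUR k).coeff n * (t ^ n * Real.sqrt (4 - t ^ 2))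
          = Polynomial.eval t (chebUR k) * Real.sqrt (4 - t ^ 2)
        rw [Polynomial.eval_eq_sum_range' hdeg', Finset.sum_mul]
        exact Finset.sum_congr rfl fun n _ => by ring
    _ = 0 := by rw [integral_chebUR k hk]; ring

noncomputable def blockElt {d : ℕ} (p : Fin d × ℕ) : FreeAlgebra ℂ (Fin d) :=
  Polynomial.aeval (FreeAlgebra.ι ℂ p.1) (chebU p.2)

def flatBlocks {d : ℕ} (L : List (Fin d × ℕ)) : List (Fin d) :=
  L.flatMap fun p => List.replicate p.2 p.1

lemma cheb_replicate_append {d : ℕ} :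
    ∀ (k : ℕ) (i : Fin d) (J : List (Fin d)), (∀ j ∈ J.head?, j ≠ i) →
      cheb (List.replicate k i ++ J)
        = Polynomial.aeval (FreeAlgebra.ι ℂ i) (chebU k) * cheb J := by
  have key : ∀ (k : ℕ) (i : Fin d) (J : List (Fin d)), (∀ j ∈ J.head?, j ≠ i) →
      (cheb (List.replicate k i ++ J)
        = Polynomial.aeval (FreeAlgebra.ι ℂ i) (chebU k) * cheb J) ∧
      (cheb (List.replicate (k+1) i ++ J)
        = Polynomial.aeval (FreeAlgebra.ι ℂ i) (chebU (k+1)) * cheb J) := by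
    intro k
    induction k with
    | zero =>
      intro i J hJ
      constructor
      · simp [chebU]
      · simp only [List.replicate_succ, List.replicate_zero, List.nil_append,
          List.cons_append, List.nil_append]
        show cheb (i :: J) = _
        rw [show chebU 1 = Polynomial.X from rfl, Polynomial.aeval_X]
        cases J with
        | nil => simp [cheb]
        | cons j t =>
          have : ¬ (i = j) := fun h => (hJ j rfl) (h ▸ rfl)
          simp [cheb, this]
    | succ n ih =>
      intro i J hJ
      refine ⟨(ih i J hJ).2, ?_⟩
      have e1 : List.replicate (n+1+1) i ++ J
          = i :: i :: (List.replicate n i ++ J) := by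
        simp [List.replicate_succ]
      rw [e1]
      have e2 : i :: (List.replicate n i ++ J) = List.replicate (n+1) i ++ J := by
        simp [List.replicate_succ]
      show FreeAlgebra.ι ℂ i * cheb (i :: (List.replicate n i ++ J))
          - (if i = i then (1:ℂ) else 0) • cheb (List.replicate n i ++ J) = _
      rw [if_pos rfl, one_smul, e2, (ih i J hJ).2, (ih i J hJ).1]
      show _ = Polynomial.aeval (FreeAlgebra.ι ℂ i)
        (Polynomial.X * chebU (n+1) - chebU n) * cheb J
      rw [map_sub, map_mul, Polynomial.aeval_X]
      noncomm_ring
  exact fun k i J hJ => (key k i J hJ).1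

lemma head?_flatBlocks {d : ℕ} (L : List (Fin d × ℕ)) (hL : ∀ p ∈ L, 1 ≤ p.2) :
    ∀ j ∈ (flatBlocks L).head?, ∃ q ∈ L.head?, q.1 = j := by
  cases L with
  | nil => simp [flatBlocks]
  | cons a r =>
    intro j hj
    have ha : 1 ≤ a.2 := hL a List.mem_cons_self
    obtain ⟨m, hm⟩ : ∃ m, a.2 = m + 1 := ⟨a.2 - 1, by omega⟩
    refine ⟨a, rfl, ?_⟩
    simp only [flatBlocks, List.flatMap_cons, hm, List.replicate_succ,
      List.cons_append, List.head?_cons, Option.mem_def, Option.some.injEq] at hj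
    exact hj

lemma cheb_flatBlocks {d : ℕ} :
    ∀ L : List (Fin d × ℕ), L.Chain' (fun a b => a.1 ≠ b.1) → (∀ p ∈ L, 1 ≤ p.2) →
      cheb (flatBlocks L) = (L.map blockElt).prod := by
  intro L
  induction L with
  | nil => intro _ _; simp [flatBlocks, cheb]
  | cons a r ih =>
    intro hch hge
    have hch' := (List.isChain_cons.mp hch)
    have hflat : flatBlocks (a :: r) = List.replicate a.2 a.1 ++ flatBlocks r := by
      simp [flatBlocks]
    rw [hflat, cheb_replicate_append a.2 a.1 (flatBlocks r) ?_, List.map_cons,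
      List.prod_cons, ih hch'.2 (fun p hp => hge p (List.mem_cons_of_mem a hp))]
    · rfl
    · intro j hj
      obtain ⟨q, hq, hq1⟩ := head?_flatBlocks r (fun p hp => hge p (List.mem_cons_of_mem a hp)) j hj
      exact hq1 ▸ (hch'.1 q hq).symm

lemma exists_blocks {d : ℕ} :
    ∀ I : List (Fin d), ∃ L : List (Fin d × ℕ),
      L.Chain' (fun a b => a.1 ≠ b.1) ∧ (∀ p ∈ L, 1 ≤ p.2) ∧ flatBlocks L = I ∧
        (L = [] ↔ I = []) := by
  intro I
  induction I with
  | nil => exact ⟨[], by simp [flatBlocks, List.Chain']⟩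
  | cons i t ih =>
    obtain ⟨L, hch, hge, hflat, hiff⟩ := ih
    cases L with
    | nil =>
      have ht : t = [] := hiff.mp rfl
      refine ⟨[(i, 1)], by simp [List.Chain'], by simp, ?_, by simp⟩
      simp [flatBlocks, ht]
    | cons a r =>
      by_cases hia : i = a.1
      · refine ⟨(a.1, a.2 + 1) :: r, ?_, ?_, ?_, by simp⟩
        · rw [List.Chain', List.isChain_cons] at hch ⊢
          exact ⟨hch.1, hch.2⟩
        · intro p hp
          rcases List.mem_cons.mp hp with h | h
          · simp [h]
          · exact hge p (List.mem_cons_of_mem a h)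
        · simp only [flatBlocks, List.flatMap_cons] at hflat ⊢
          rw [List.replicate_succ, List.cons_append, hflat, hia]
      · refine ⟨(i, 1) :: a :: r, ?_, ?_, ?_, by simp⟩
        · rw [List.Chain', List.isChain_cons]
          exact ⟨fun y hy => by simp_all, hch⟩
        · intro p hp
          rcases List.mem_cons.mp hp with h | h
          · simp [h]
          · exact hge p h
        · simp only [flatBlocks, List.flatMap_cons, List.replicate_succ] at hflat ⊢
          simp [hflat]

lemma tau_blockProd {A : Type*} [Ring A] [StarRing A] [Algebra ℂ A] {d : ℕ}
    (τ : A →ₗ[ℂ] ℂ) (x : Fin d → A) (hx : IsFreeSemicircular τ x)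
    (L : List (Fin d × ℕ)) (hne : L ≠ [])
    (hch : L.Chain' (fun a b => a.1 ≠ b.1)) (hge : ∀ p ∈ L, 1 ≤ p.2) :
    τ (FreeAlgebra.lift ℂ x ((L.map blockElt).prod)) = 0 := by
  cases L with
  | nil => exact absurd rfl hne
  | cons a tl =>
    set L := a :: tl with hL
    have hlen : L.length = tl.length + 1 := rfl
    set j : Fin (tl.length + 1) → Fin d := fun s => (L.get s).1 with hj
    set p : Fin (tl.length + 1) → Polynomial ℂ := fun s => chebU (L.get s).2 with hp
    have halt : ∀ s : Fin tl.length, j s.castSucc ≠ j s.succ := by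
      intro s
      have h := List.isChain_iff_getElem.mp hch s.val (by simp [hL])
      exact h
    have htau0 : ∀ s : Fin (tl.length + 1),
        τ (Polynomial.aeval (x (j s)) (p s)) = 0 := by
      intro s
      exact tau_aeval_chebU τ x hx (j s) _ (hge (L.get s) (by apply List.get_mem))
    have key := hx.2.2 tl.length j halt p
    have heq : (List.ofFn fun s : Fin (tl.length + 1) =>
        Polynomial.aeval (x (j s)) (p s)
          - τ (Polynomial.aeval (x (j s)) (p s)) • (1 : A))
        = L.map fun q => Polynomial.aeval (x q.1) (chebU q.2) := by
      have : ∀ s : Fin (tl.length + 1),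
          Polynomial.aeval (x (j s)) (p s)
            - τ (Polynomial.aeval (x (j s)) (p s)) • (1 : A)
          = Polynomial.aeval (x (L.get s).1) (chebU (L.get s).2) := by
        intro s
        rw [htau0 s, zero_smul, sub_zero]
      simp only [this]
      rw [show (fun s : Fin (tl.length+1) =>
          Polynomial.aeval (x (L.get s).1) (chebU (L.get s).2))
        = (fun q : Fin d × ℕ => Polynomial.aeval (x q.1) (chebU q.2)) ∘ L.get from rfl,
        ← List.map_ofFn, List.ofFn_get]
    rw [heq] at key
    rw [map_list_prod, List.map_map]
    have : (FreeAlgebra.lift ℂ x) ∘ blockElt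
        = fun q : Fin d × ℕ => Polynomial.aeval (x q.1) (chebU q.2) := by
      funext q
      simp only [Function.comp, blockElt]
      rw [← Polynomial.aeval_algHom_apply (FreeAlgebra.lift ℂ x) (FreeAlgebra.ι ℂ q.1),
        FreeAlgebra.lift_ι_apply]
    rw [this]
    exact key

lemma tau_cheb {A : Type*} [Ring A] [StarRing A] [Algebra ℂ A] {d : ℕ}
    (τ : A →ₗ[ℂ] ℂ) (x : Fin d → A) (hx : IsFreeSemicircular τ x)
    (I : List (Fin d)) (hne : I ≠ []) :
    τ (FreeAlgebra.lift ℂ x (cheb I)) = 0 := by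
  obtain ⟨L, hch, hge, hflat, hiff⟩ := exists_blocks I
  rw [← hflat, cheb_flatBlocks L hch hge]
  exact tau_blockProd τ x hx L (fun h => hne (hflat ▸ hiff.mp h)) hch hge

section Deriv
variable {d : ℕ}
variable (D : Fin d → (FreeAlgebra ℂ (Fin d) →ₗ[ℂ]
      FreeAlgebra ℂ (Fin d) ⊗[ℂ] FreeAlgebra ℂ (Fin d)))
variable (hD1 : ∀ i j : Fin d, D i (FreeAlgebra.ι ℂ j) =
      if i = j then (1 : FreeAlgebra ℂ (Fin d)) ⊗ₜ[ℂ] (1 : FreeAlgebra ℂ (Fin d)) else 0)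
variable (hD2 : ∀ (i : Fin d) (P Q : FreeAlgebra ℂ (Fin d)),
      D i (P * Q) = D i P * ((1 : FreeAlgebra ℂ (Fin d)) ⊗ₜ[ℂ] Q)
        + (P ⊗ₜ[ℂ] (1 : FreeAlgebra ℂ (Fin d))) * D i Q)

include hD2 in
lemma D_one (i : Fin d) : D i 1 = 0 := by
  have h := hD2 i 1 1
  rw [one_mul] at h
  have h1 : ((1 : FreeAlgebra ℂ (Fin d)) ⊗ₜ[ℂ] (1 : FreeAlgebra ℂ (Fin d)))
      = (1 : FreeAlgebra ℂ (Fin d) ⊗[ℂ] FreeAlgebra ℂ (Fin d)) := rfl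
  rw [h1, mul_one, one_mul] at h
  have h2 := add_right_cancel (a := D i 1) (b := D i 1) (c := 0)
  apply h2
  rw [zero_add]
  exact h.symm

noncomputable def chebDTerm {d : ℕ} (i : Fin d) (w : List (Fin d)) (m : ℕ) :
    FreeAlgebra ℂ (Fin d) ⊗[ℂ] FreeAlgebra ℂ (Fin d) :=
  (if w.getD m i = i then (1:ℂ) else 0) • (cheb (w.take m) ⊗ₜ[ℂ] cheb (w.drop (m+1)))

lemma chebDTerm_zero {d : ℕ} (i j : Fin d) (t : List (Fin d)) :
    chebDTerm i (j :: t) 0 = (if j = i then (1:ℂ) else 0) •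
      ((1 : FreeAlgebra ℂ (Fin d)) ⊗ₜ[ℂ] cheb t) := by
  simp only [chebDTerm, List.getD_cons_zero, List.take_zero, List.drop_succ_cons,
    List.drop_zero]
  rfl

lemma chebDTerm_succ {d : ℕ} (i j : Fin d) (t : List (Fin d)) (m : ℕ) :
    chebDTerm i (j :: t) (m + 1) = (if t.getD m i = i then (1:ℂ) else 0) •
      (cheb (j :: t.take m) ⊗ₜ[ℂ] cheb (t.drop (m+1))) := by
  simp only [chebDTerm, List.getD_cons_succ, List.take_succ_cons, List.drop_succ_cons]

include hD1 hD2 in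
lemma D_cheb (i : Fin d) : ∀ w : List (Fin d),
    D i (cheb w) = ∑ m ∈ Finset.range w.length, chebDTerm i w m := by
  intro w
  induction w using cheb.induct with
  | case1 =>
    show D i (1 : FreeAlgebra ℂ (Fin d)) = _
    simp [D_one D hD2 i]
  | case2 j =>
    rw [show cheb [j] = FreeAlgebra.ι ℂ j from rfl, hD1]
    simp only [List.length_singleton, Finset.sum_range_one, chebDTerm_zero]
    by_cases h : i = j
    · rw [if_pos h, if_pos h.symm, one_smul]
      rfl
    · rw [if_neg h, if_neg (fun hji => h hji.symm), zero_smul]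
  | case3 j k t ih1 ih2 =>
    have hw : cheb (j :: k :: t) = FreeAlgebra.ι ℂ j * cheb (k :: t)
        - (if j = k then (1:ℂ) else 0) • cheb t := rfl
    rw [hw, map_sub, map_smul, hD2, hD1, ih1, ih2]
    have hA : (if i = j then (1 : FreeAlgebra ℂ (Fin d)) ⊗ₜ[ℂ] 1 else 0) *
        ((1 : FreeAlgebra ℂ (Fin d)) ⊗ₜ[ℂ] cheb (k :: t)) = chebDTerm i (j :: k :: t) 0 := by
      rw [chebDTerm_zero]
      by_cases h : i = j
      · rw [if_pos h, if_pos h.symm, one_smul, Algebra.TensorProduct.tmul_mul_tmul,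
          one_mul, one_mul]
      · rw [if_neg h, if_neg (fun hji => h hji.symm), zero_smul, zero_mul]
    have hB0 : ((FreeAlgebra.ι ℂ j) ⊗ₜ[ℂ] (1 : FreeAlgebra ℂ (Fin d)))
        * chebDTerm i (k :: t) 0 = chebDTerm i (j :: k :: t) 1 := by
      rw [chebDTerm_zero, show (1 : ℕ) = 0 + 1 from rfl, chebDTerm_succ,
        List.getD_cons_zero, List.take_zero, List.drop_succ_cons, List.drop_zero,
        mul_smul_comm, Algebra.TensorProduct.tmul_mul_tmul, mul_one, one_mul]
      rfl
    have hBm : ∀ m, ((FreeAlgebra.ι ℂ j) ⊗ₜ[ℂ] (1 : FreeAlgebra ℂ (Fin d)))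
        * chebDTerm i (k :: t) (m + 1)
        = chebDTerm i (j :: k :: t) (m + 2)
          + (if j = k then (1:ℂ) else 0) • chebDTerm i t m := by
      intro m
      have hmul : FreeAlgebra.ι ℂ j * cheb (k :: t.take m)
          = cheb (j :: k :: t.take m) + (if j = k then (1:ℂ) else 0) • cheb (t.take m) := by
        rw [show cheb (j :: k :: t.take m) = FreeAlgebra.ι ℂ j * cheb (k :: t.take m)
          - (if j = k then (1:ℂ) else 0) • cheb (t.take m) from rfl]
        rw [sub_add_cancel]
      rw [chebDTerm_succ, show m + 2 = (m + 1) + 1 from rfl, chebDTerm_succ,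
        List.take_succ_cons, List.drop_succ_cons, List.getD_cons_succ,
        mul_smul_comm, Algebra.TensorProduct.tmul_mul_tmul, one_mul, hmul,
        TensorProduct.add_tmul, smul_add]
      congr 1
      rw [TensorProduct.smul_tmul', smul_smul]
      simp only [chebDTerm]
      rw [smul_smul, mul_comm, TensorProduct.smul_tmul']
    rw [Finset.mul_sum, show (k :: t).length = t.length + 1 from rfl,
      Finset.sum_range_succ' (fun m => ((FreeAlgebra.ι ℂ j) ⊗ₜ[ℂ]
        (1 : FreeAlgebra ℂ (Fin d))) * chebDTerm i (k :: t) m) t.length]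
    simp only [hBm]
    rw [Finset.sum_add_distrib, ← Finset.smul_sum, hB0, hA,
      show (j :: k :: t).length = t.length + 1 + 1 from rfl,
      Finset.sum_range_succ' (fun m => chebDTerm i (j :: k :: t) m) (t.length + 1),
      Finset.sum_range_succ' (fun m => chebDTerm i (j :: k :: t) (m + 1)) t.length]
    have e2 : ∀ m : ℕ, m + 1 + 1 = m + 2 := fun _ => rfl
    simp only [e2]
    abel


end Deriv

/-- `(ev⊗id)(∂_{i_n} P_{i_{n−1},…,i_1}) = δ_{i_{n−1},i_n} P_{i_{n−2},…,i_1}`, and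
consequently the recursive definition of the free Chebyshev polynomials agrees with
the definition `P_{i_n,…,i_1} = X_{i_n} P_{i_{n−1},…,i_1} − (ev⊗id)(∂_{i_n} P_{i_{n−1},…,i_1})`.
Here `D` is the (unique) noncommutative derivative and `ev⊗id` is induced by
`A ⊗ B ↦ τ(A(x))·B`. -/
theorem cheb_recursion_via_deriv {d : ℕ} {A : Type*} [NormedRing A] [StarRing A]
    [CStarRing A] [CompleteSpace A] [NormedAlgebra ℂ A] [StarModule ℂ A]
    (τ : A →ₗ[ℂ] ℂ) (x : Fin d → A)
    (hτ : IsFaithfulTracialState τ) (hx : IsFreeSemicircular τ x)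
    (D : Fin d → (FreeAlgebra ℂ (Fin d) →ₗ[ℂ]
      FreeAlgebra ℂ (Fin d) ⊗[ℂ] FreeAlgebra ℂ (Fin d)))
    (hD1 : ∀ i j : Fin d, D i (FreeAlgebra.ι ℂ j) =
      if i = j then (1 : FreeAlgebra ℂ (Fin d)) ⊗ₜ[ℂ] (1 : FreeAlgebra ℂ (Fin d)) else 0)
    (hD2 : ∀ (i : Fin d) (P Q : FreeAlgebra ℂ (Fin d)),
      D i (P * Q) = D i P * ((1 : FreeAlgebra ℂ (Fin d)) ⊗ₜ[ℂ] Q)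
        + (P ⊗ₜ[ℂ] (1 : FreeAlgebra ℂ (Fin d))) * D i Q)
    (E : FreeAlgebra ℂ (Fin d) ⊗[ℂ] FreeAlgebra ℂ (Fin d) →ₗ[ℂ] FreeAlgebra ℂ (Fin d))
    (hE : ∀ P Q : FreeAlgebra ℂ (Fin d),
      E (P ⊗ₜ[ℂ] Q) = τ (FreeAlgebra.lift ℂ x P) • Q) :
    (∀ (i j : Fin d) (t : List (Fin d)),
      E (D i (cheb (j :: t))) = (if j = i then (1 : ℂ) else 0) • cheb t) ∧
    ∀ (i : Fin d) (L : List (Fin d)),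
      cheb (i :: L) = FreeAlgebra.ι ℂ i * cheb L - E (D i (cheb L)) := by
  have hτ1 : τ 1 = 1 := hτ.1
  have part1 : ∀ (i j : Fin d) (t : List (Fin d)),
      E (D i (cheb (j :: t))) = (if j = i then (1 : ℂ) else 0) • cheb t := by
    intro i j t
    rw [D_cheb D hD1 hD2 i (j :: t), map_sum,
      show (j :: t).length = t.length + 1 from rfl,
      Finset.sum_range_succ' (fun m => E (chebDTerm i (j :: t) m)) t.length]
    have h0 : E (chebDTerm i (j :: t) 0) = (if j = i then (1 : ℂ) else 0) • cheb t := by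
      rw [chebDTerm_zero, map_smul, hE, map_one, hτ1, one_smul]
    have hs : ∀ m ∈ Finset.range t.length, E (chebDTerm i (j :: t) (m + 1)) = 0 := by
      intro m _
      rw [chebDTerm_succ, map_smul, hE,
        tau_cheb τ x hx (j :: t.take m) (List.cons_ne_nil _ _), zero_smul, smul_zero]
    rw [Finset.sum_eq_zero hs, zero_add, h0]
  refine ⟨part1, fun i L => ?_⟩
  cases L with
  | nil =>
    rw [show cheb ([] : List (Fin d)) = 1 from rfl, D_one D hD2 i, map_zero, sub_zero,
      mul_one]
    rfl
  | cons j t =>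
    rw [part1 i j t]
    show FreeAlgebra.ι ℂ i * cheb (j :: t) - (if i = j then (1:ℂ) else 0) • cheb t = _
    congr 2
    simp [eq_comm]
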